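/- Fix n ≥ 2, a symmetric nonnegative matrix Z with zero diagonal, and α, β > 0. Define F_{α,β}(W) = ∑_{ij} W_{ij}Z_{ij} − α ∑_i log(∑_j W_{ij}) + (β/2)∑_{ij} W_{ij}² on symmetric nonnegative matrices with zero diagonal and positive row sums. Then W minimizes F_{α,β} over this set if and only if W = √(α/β) · V where V minimizes F_{1,1} with Z replaced by Z/√(αβ). -/

import Mathlib

/-- The feasible set: symmetric nonnegative matrices with zero diagonal and
positive row sums. -/
def GraphSet (n : ℕ) : Set (Matrix (Fin n) (Fin n) ℝ) :=
  {W | W.IsSymm ∧ (∀ i j, 0 ≤ W i j) ∧ (∀ i, W i i = 0) ∧ ∀ i, 0 < ∑ j, W i j}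

/-- The log-degree graph learning objective with parameters α, β and distances Z. -/
noncomputable def logObj (n : ℕ) (α β : ℝ) (Z W : Matrix (Fin n) (Fin n) ℝ) : ℝ :=
  (∑ i, ∑ j, W i j * Z i j) - α * ∑ i, Real.log (∑ j, W i j)
    + (β / 2) * ∑ i, ∑ j, (W i j) ^ 2

lemma smul_mem_graphSet (n : ℕ) (c : ℝ) (hc : 0 < c) (V : Matrix (Fin n) (Fin n) ℝ)
    (hV : V ∈ GraphSet n) : c • V ∈ GraphSet n := by
  obtain ⟨hs, hnn, hd, hr⟩ := hV
  refine ⟨?_, ?_, ?_, ?_⟩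
  · rw [Matrix.IsSymm, Matrix.transpose_smul, hs]
  · intro i j
    simpa using mul_nonneg hc.le (hnn i j)
  · intro i; simp [hd i]
  · intro i
    have h : ∑ j, (c • V) i j = c * ∑ j, V i j := by
      simp [Finset.mul_sum]
    rw [h]
    exact mul_pos hc (hr i)

lemma obj_scale (n : ℕ) (Z : Matrix (Fin n) (Fin n) ℝ) (α β : ℝ) (hα : 0 < α) (hβ : 0 < β)
    (V : Matrix (Fin n) (Fin n) ℝ) (hV : ∀ i, 0 < ∑ j, V i j) :
    logObj n α β Z (Real.sqrt (α / β) • V) =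
      α * logObj n 1 1 (fun i j => Z i j / Real.sqrt (α * β)) V
        - α * n * Real.log (Real.sqrt (α / β)) := by
  set c := Real.sqrt (α / β) with hcdef
  set s := Real.sqrt (α * β) with hsdef
  have hc : 0 < c := Real.sqrt_pos.mpr (div_pos hα hβ)
  have hs : 0 < s := Real.sqrt_pos.mpr (mul_pos hα hβ)
  have hc2 : c ^ 2 = α / β := Real.sq_sqrt (div_pos hα hβ).le
  have hcs : c * s = α := by
    rw [hcdef, hsdef, ← Real.sqrt_mul (div_pos hα hβ).le]
    have : α / β * (α * β) = α * α := by field_simp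
    rw [this, Real.sqrt_mul_self hα.le]
  have h1 : ∑ i, ∑ j, (c • V) i j * Z i j = c * ∑ i, ∑ j, V i j * Z i j := by
    simp [Finset.mul_sum, mul_assoc]
  have h2 : ∑ i, Real.log (∑ j, (c • V) i j) =
      (n : ℝ) * Real.log c + ∑ i, Real.log (∑ j, V i j) := by
    have key : ∀ i, Real.log (∑ j, (c • V) i j) = Real.log c + Real.log (∑ j, V i j) := by
      intro i
      have h : ∑ j, (c • V) i j = c * ∑ j, V i j := by simp [Finset.mul_sum]
      rw [h, Real.log_mul hc.ne' (hV i).ne']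
    rw [Finset.sum_congr rfl fun i _ => key i, Finset.sum_add_distrib, Finset.sum_const,
      Finset.card_univ, Fintype.card_fin, nsmul_eq_mul]
  have h3 : ∑ i, ∑ j, ((c • V) i j) ^ 2 = c ^ 2 * ∑ i, ∑ j, (V i j) ^ 2 := by
    simp [mul_pow, Finset.mul_sum]
  have h4 : α * ∑ i, ∑ j, V i j * (Z i j / s) = c * ∑ i, ∑ j, V i j * Z i j := by
    rw [Finset.mul_sum, Finset.mul_sum]
    refine Finset.sum_congr rfl fun i _ => ?_
    rw [Finset.mul_sum, Finset.mul_sum]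
    refine Finset.sum_congr rfl fun j _ => ?_
    field_simp
    linear_combination (-1 : ℝ) * V i j * Z i j * hcs
  have h5 : β / 2 * c ^ 2 = α / 2 := by
    rw [hc2]; field_simp
  simp only [logObj, h1, h2, h3]
  set A := ∑ i, ∑ j, V i j * Z i j
  set A' := ∑ i, ∑ j, V i j * (Z i j / s)
  set L := ∑ i, Real.log (∑ j, V i j)
  set B := ∑ i, ∑ j, (V i j) ^ 2
  linear_combination (-1 : ℝ) * h4 + B * h5

theorem stmt_12 (n : ℕ) (hn : 2 ≤ n) (Z : Matrix (Fin n) (Fin n) ℝ)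
    (hZsymm : Z.IsSymm) (hZnonneg : ∀ i j, 0 ≤ Z i j) (hZdiag : ∀ i, Z i i = 0)
    (α β : ℝ) (hα : 0 < α) (hβ : 0 < β) (W : Matrix (Fin n) (Fin n) ℝ) :
    (W ∈ GraphSet n ∧ ∀ V ∈ GraphSet n, logObj n α β Z W ≤ logObj n α β Z V) ↔
      ∃ V : Matrix (Fin n) (Fin n) ℝ, V ∈ GraphSet n ∧
        (∀ U ∈ GraphSet n,
          logObj n 1 1 (fun i j => Z i j / Real.sqrt (α * β)) V ≤
            logObj n 1 1 (fun i j => Z i j / Real.sqrt (α * β)) U) ∧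
        W = Real.sqrt (α / β) • V := by
  set c := Real.sqrt (α / β) with hcdef
  have hc : 0 < c := Real.sqrt_pos.mpr (div_pos hα hβ)
  constructor
  · rintro ⟨hW, hmin⟩
    refine ⟨c⁻¹ • W,
      smul_mem_graphSet n _ (inv_pos.mpr hc) W hW, ?_,
      (smul_inv_smul₀ hc.ne' W).symm⟩
    intro U hU
    have hUm : c • U ∈ GraphSet n := smul_mem_graphSet n _ hc U hU
    have h1 := hmin _ hUm
    have hWeq : W = c • (c⁻¹ • W) := (smul_inv_smul₀ hc.ne' W).symm
    rw [hWeq,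
      obj_scale n Z α β hα hβ _ (smul_mem_graphSet n _ (inv_pos.mpr hc) W hW).2.2.2,
      obj_scale n Z α β hα hβ _ hU.2.2.2] at h1
    have h2 : α * logObj n 1 1 (fun i j => Z i j / Real.sqrt (α * β)) (c⁻¹ • W) ≤
        α * logObj n 1 1 (fun i j => Z i j / Real.sqrt (α * β)) U := by linarith
    exact (mul_le_mul_iff_right₀ hα).mp h2
  · rintro ⟨V, hV, hmin, rfl⟩
    refine ⟨smul_mem_graphSet n _ hc V hV, ?_⟩
    intro U hU
    have hU' : c⁻¹ • U ∈ GraphSet n := smul_mem_graphSet n _ (inv_pos.mpr hc) U hU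
    have h1 := hmin _ hU'
    have hUeq : U = c • (c⁻¹ • U) := (smul_inv_smul₀ hc.ne' U).symm
    rw [hUeq, obj_scale n Z α β hα hβ _ hV.2.2.2,
      obj_scale n Z α β hα hβ _ hU'.2.2.2]
    have h2 := mul_le_mul_of_nonneg_left h1 hα.le
    linarith
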